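/- Suppose P is non-constant and the characteristic of K is either zero or an odd prime p. Then for every n > 2 (with the additional requirement p ∤ n in positive characteristic), the polynomial L_n has a primitive prime divisor: there exists an irreducible π ∈ K[T] with π ∣ L_n and π ∤ L_m for all 1 ≤ m < n. -/

import Mathlib

open Polynomial

noncomputable section AuxHG

variable {L : Type*} [Field L]

/-- Homogenization-style evaluation: `hg p q f D = ∑ f_i p^i q^(D-i)`. -/
def hg (p q f : Polynomial L) (D : ℕ) : Polynomial L :=
  ∑ i ∈ Finset.range (D + 1), Polynomial.C (f.coeff i) * p ^ i * q ^ (D - i)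

lemma hg_map (p q f : Polynomial L) (hq : q ≠ 0) (D : ℕ) (hf : f.natDegree ≤ D) :
    algebraMap (Polynomial L) (RatFunc L) (hg p q f D)
      = algebraMap (Polynomial L) (RatFunc L) q ^ D *
        Polynomial.aeval
          (algebraMap (Polynomial L) (RatFunc L) p / algebraMap (Polynomial L) (RatFunc L) q) f := by
  set A := algebraMap (Polynomial L) (RatFunc L) with hA
  have hAinj : Function.Injective A := IsFractionRing.injective (Polynomial L) (RatFunc L)
  have hqA : A q ≠ 0 := fun h => hq (hAinj (by simp [h]))
  set u := A p / A q with hu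
  rw [Polynomial.aeval_eq_sum_range' (Nat.lt_succ_of_le hf)]
  rw [hg, map_sum, Finset.mul_sum]
  refine Finset.sum_congr rfl fun i hi => ?_
  have hi' : i ≤ D := Nat.lt_succ_iff.mp (Finset.mem_range.mp hi)
  have hC : A (Polynomial.C (f.coeff i)) = algebraMap L (RatFunc L) (f.coeff i) := by
    rw [hA, IsScalarTower.algebraMap_apply L (Polynomial L) (RatFunc L),
      Polynomial.algebraMap_eq]
  rw [map_mul, map_mul, map_pow, map_pow, hC, Algebra.smul_def]
  have hkey : A p ^ i * A q ^ (D - i) = A q ^ D * u ^ i := by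
    rw [hu, div_pow]
    rw [show D = (D - i) + i from (Nat.sub_add_cancel hi').symm, Nat.add_sub_cancel]
    rw [pow_add]
    field_simp
  rw [mul_assoc, hkey]
  ring

lemma hg_mul (p q f g : Polynomial L) (hq : q ≠ 0) (Df Dg : ℕ)
    (hf : f.natDegree ≤ Df) (hgg : g.natDegree ≤ Dg) :
    hg p q (f * g) (Df + Dg) = hg p q f Df * hg p q g Dg := by
  apply IsFractionRing.injective (Polynomial L) (RatFunc L)
  rw [map_mul, hg_map p q f hq Df hf, hg_map p q g hq Dg hgg,
    hg_map p q (f * g) hq (Df + Dg) (le_trans (Polynomial.natDegree_mul_le) (add_le_add hf hgg)),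
    map_mul, pow_add]
  ring

lemma hg_pow_sub (p q : Polynomial L) (hq : q ≠ 0) (n : ℕ) :
    hg p q ((Polynomial.X : Polynomial L) ^ n - 1) n = p ^ n - q ^ n := by
  apply IsFractionRing.injective (Polynomial L) (RatFunc L)
  have hdeg : ((Polynomial.X : Polynomial L) ^ n - 1).natDegree ≤ n := by
    refine le_trans (Polynomial.natDegree_sub_le _ _) ?_
    simp
  rw [hg_map p q _ hq n hdeg]
  set A := algebraMap (Polynomial L) (RatFunc L) with hA
  have hAinj : Function.Injective A := IsFractionRing.injective (Polynomial L) (RatFunc L)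
  have hqA : A q ≠ 0 := fun h => hq (hAinj (by simp [h]))
  rw [map_sub, map_pow, Polynomial.aeval_X, map_one, map_sub, map_pow, map_pow]
  rw [mul_sub, mul_one, div_pow, mul_div_cancel₀ _ (pow_ne_zero n hqA)]

lemma hg_prod (p q : Polynomial L) (hq : q ≠ 0) (s : Finset L) :
    hg p q (∏ ζ ∈ s, (Polynomial.X - Polynomial.C ζ)) s.card
      = ∏ ζ ∈ s, (p - Polynomial.C ζ * q) := by
  apply IsFractionRing.injective (Polynomial L) (RatFunc L)
  have hdeg : (∏ ζ ∈ s, ((Polynomial.X : Polynomial L) - Polynomial.C ζ)).natDegree ≤ s.card := by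
    refine le_trans (Polynomial.natDegree_prod_le _ _) ?_
    refine le_trans (Finset.sum_le_card_nsmul _ _ 1 fun x _ => ?_) (by simp)
    simp [Polynomial.natDegree_X_sub_C]
  rw [hg_map p q _ hq s.card hdeg]
  set A := algebraMap (Polynomial L) (RatFunc L) with hA
  have hAinj : Function.Injective A := IsFractionRing.injective (Polynomial L) (RatFunc L)
  have hqA : A q ≠ 0 := fun h => hq (hAinj (by simp [h]))
  rw [map_prod, map_prod]
  have hterm : ∀ ζ ∈ s, A (p - Polynomial.C ζ * q)
      = A q * (A p / A q - algebraMap L (RatFunc L) ζ) := by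
    intro ζ _
    rw [map_sub, map_mul, mul_sub, mul_div_cancel₀ _ hqA]
    have hC : A (Polynomial.C ζ) = algebraMap L (RatFunc L) ζ := by
      rw [hA, IsScalarTower.algebraMap_apply L (Polynomial L) (RatFunc L),
        Polynomial.algebraMap_eq]
    rw [hC]
    ring
  rw [Finset.prod_congr rfl hterm, Finset.prod_mul_distrib, Finset.prod_const]
  congr 1
  refine Finset.prod_congr rfl fun ζ _ => ?_
  rw [map_sub, Polynomial.aeval_X, Polynomial.aeval_C]

lemma hg_map_ringHom {L' : Type*} [Field L'] (ι : L →+* L') (p q f : Polynomial L) (D : ℕ) :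
    (hg p q f D).map ι = hg (p.map ι) (q.map ι) (f.map ι) D := by
  simp only [hg, Polynomial.map_sum, Polynomial.map_mul, Polynomial.map_pow, Polynomial.map_C,
    Polynomial.coeff_map]

end AuxHG

/-- Theorem 2.6: if `P` is non-constant and the characteristic of `K` is zero or an
odd prime, then for every `n > 2` (not divisible by the characteristic in positive
characteristic) the term `L_n` has a primitive prime divisor. -/
theorem stmt_19 {K : Type*} [Field K]
    (hchar : ringChar K = 0 ∨ (Nat.Prime (ringChar K) ∧ Odd (ringChar K)))
    (σ : K ≃+* K) (hσ : ∀ x, σ (σ x) = x)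
    (P : Polynomial K) (hP : P ≠ 0) (hPc : P.natDegree ≠ 0)
    (Pσ : Polynomial K) (hPσ : Pσ = P.map (σ : K →+* K))
    (hne : P ≠ Pσ) (hcop : IsCoprime (P + Pσ) (P * Pσ))
    (L : ℕ → Polynomial K)
    (hL : ∀ n, L n = ∑ i ∈ Finset.range n, P ^ i * Pσ ^ (n - 1 - i)) :
    ∀ n : ℕ, 2 < n → ¬ ringChar K ∣ n →
      ∃ π : Polynomial K, Irreducible π ∧ π ∣ L n ∧
        ∀ m : ℕ, 1 ≤ m → m < n → ¬ π ∣ L m := by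
  intro n hn2 hndvd
  classical
  have hn0 : 0 < n := by omega
  haveI := ringChar.charP K
  have hnK : (n : K) ≠ 0 := fun h => hndvd ((CharP.cast_eq_zero_iff K (ringChar K) n).mp h)
  have hσinj : Function.Injective (σ : K →+* K) := σ.injective
  have hPσ0 : Pσ ≠ 0 := by
    rw [hPσ]
    exact fun h => hP (Polynomial.map_eq_zero_iff hσinj |>.mp h)
  have hdegPσ : Pσ.natDegree = P.natDegree := by
    rw [hPσ]; exact Polynomial.natDegree_map_eq_of_injective hσinj P
  -- common divisors of P and Pσ are units
  have hunit : ∀ r : Polynomial K, r ∣ P → r ∣ Pσ → IsUnit r := by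
    intro r h1 h2
    exact hcop.isUnit_of_dvd' (dvd_add h1 h2) (h1.mul_right Pσ)
  have hPP : IsCoprime P Pσ := by
    have h1 : IsCoprime (P + Pσ) Pσ := hcop.of_isCoprime_of_dvd_right (dvd_mul_left _ _)
    have h2 := h1.add_mul_left_left (-1)
    have : P + Pσ + Pσ * -1 = P := by ring
    rwa [this] at h2
  set d := n.totient with hd
  have hd0 : 0 < d := Nat.totient_pos.mpr hn0
  have hdn : d ≤ n := Nat.totient_le n
  set c : ℕ → K := fun i => (Polynomial.cyclotomic n K).coeff i with hc
  set Φ : Polynomial K := hg P Pσ (Polynomial.cyclotomic n K) d with hΦ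
  -- Φ divides P^n - Pσ^n
  have hdvd1 : Φ ∣ P ^ n - Pσ ^ n := by
    set Q : Polynomial K := ∏ i ∈ n.divisors.erase n, Polynomial.cyclotomic i K with hQ
    have hsplit : (Polynomial.X : Polynomial K) ^ n - 1 = Polynomial.cyclotomic n K * Q := by
      rw [hQ, Finset.mul_prod_erase n.divisors (fun i => Polynomial.cyclotomic i K) (Nat.mem_divisors_self n hn0.ne')]
      exact (Polynomial.prod_cyclotomic_eq_X_pow_sub_one hn0 K).symm
    have hQdeg : Q.natDegree ≤ n - d := by
      refine le_trans (Polynomial.natDegree_prod_le _ _) ?_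
      have : ∑ i ∈ n.divisors.erase n, (Polynomial.cyclotomic i K).natDegree
          = ∑ i ∈ n.divisors.erase n, i.totient := by
        exact Finset.sum_congr rfl fun i _ => Polynomial.natDegree_cyclotomic i K
      rw [this]
      have hsum : n.totient + ∑ i ∈ n.divisors.erase n, i.totient = n := by
        rw [Finset.add_sum_erase _ _ (Nat.mem_divisors_self n hn0.ne')]
        exact Nat.sum_totient n
      omega
    have hmul := hg_mul P Pσ (Polynomial.cyclotomic n K) Q hPσ0 d (n - d)
      (le_of_eq (Polynomial.natDegree_cyclotomic n K)) hQdeg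
    rw [Nat.add_sub_cancel' hdn, ← hsplit, hg_pow_sub P Pσ hPσ0 n] at hmul
    exact ⟨_, hmul⟩
  -- work over the algebraic closure to show Φ is a non-zero non-unit
  set Kb := AlgebraicClosure K with hKb
  set ι : K →+* Kb := algebraMap K Kb with hι
  have hιinj : Function.Injective ι := ι.injective
  have hnKb : (n : Kb) ≠ 0 := by
    intro h
    apply hnK
    apply hιinj
    rw [map_natCast, map_zero, h]
  haveI : NeZero ((n : Kb)) := ⟨hnKb⟩
  obtain ⟨ζ₀, hζ₀⟩ := HasEnoughRootsOfUnity.exists_primitiveRoot Kb n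
  have hcard : (primitiveRoots n Kb).card = d := hζ₀.card_primitiveRoots
  have hPbσ0 : Pσ.map ι ≠ 0 := fun h => hPσ0 (Polynomial.map_eq_zero_iff hιinj |>.mp h)
  have hmapΦ : Φ.map ι = ∏ ζ ∈ primitiveRoots n Kb, (P.map ι - Polynomial.C ζ * Pσ.map ι) := by
    rw [hΦ, hg_map_ringHom, Polynomial.map_cyclotomic,
      Polynomial.cyclotomic_eq_prod_X_sub_primitiveRoots hζ₀, ← hcard]
    exact hg_prod (P.map ι) (Pσ.map ι) hPbσ0 _
  have hPPb : IsCoprime (P.map ι) (Pσ.map ι) := hPP.map (Polynomial.mapRingHom ι)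
  have hdegb : (Pσ.map ι).natDegree = P.natDegree := by
    rw [Polynomial.natDegree_map_eq_of_injective hιinj, hdegPσ]
  have hfac_ne : ∀ ζ ∈ primitiveRoots n Kb, P.map ι - Polynomial.C ζ * Pσ.map ι ≠ 0 := by
    intro ζ _ h
    have hdvd : Pσ.map ι ∣ P.map ι := ⟨Polynomial.C ζ, by
      rw [sub_eq_zero] at h; rw [h]; ring⟩
    have : IsUnit (Pσ.map ι) := hPPb.isUnit_of_dvd' hdvd dvd_rfl
    have := Polynomial.natDegree_eq_zero_of_isUnit this
    rw [hdegb] at this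
    exact hPc this
  have hΦ0 : Φ ≠ 0 := by
    intro h
    have : Φ.map ι = 0 := by rw [h, Polynomial.map_zero]
    rw [hmapΦ] at this
    obtain ⟨ζ, hζmem, hζ0⟩ := Finset.prod_eq_zero_iff.mp this
    exact hfac_ne ζ hζmem hζ0
  have hΦnu : ¬ IsUnit Φ := by
    intro hu
    have huM : IsUnit (Φ.map ι) := hu.map (Polynomial.mapRingHom ι)
    rw [hmapΦ] at huM
    have hcard2 : 1 < (primitiveRoots n Kb).card := by
      rw [hcard, hd]
      have h1 : n.totient ≠ 1 := by
        intro h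
        rcases Nat.totient_eq_one_iff.mp h with h | h <;> omega
      omega
    obtain ⟨ζ₁, hζ₁, ζ₂, hζ₂, hζne⟩ := Finset.one_lt_card.mp hcard2
    have hu1 : IsUnit (P.map ι - Polynomial.C ζ₁ * Pσ.map ι) :=
      isUnit_of_dvd_unit (Finset.dvd_prod_of_mem (fun ζ => P.map ι - Polynomial.C ζ * Pσ.map ι) hζ₁) huM
    have hu2 : IsUnit (P.map ι - Polynomial.C ζ₂ * Pσ.map ι) :=
      isUnit_of_dvd_unit (Finset.dvd_prod_of_mem (fun ζ => P.map ι - Polynomial.C ζ * Pσ.map ι) hζ₂) huM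
    obtain ⟨c₁, hc₁⟩ := Polynomial.natDegree_eq_zero.mp (Polynomial.natDegree_eq_zero_of_isUnit hu1)
    obtain ⟨c₂, hc₂⟩ := Polynomial.natDegree_eq_zero.mp (Polynomial.natDegree_eq_zero_of_isUnit hu2)
    have hkey : Polynomial.C (ζ₂ - ζ₁) * Pσ.map ι = Polynomial.C (c₁ - c₂) := by
      rw [map_sub, map_sub]
      linear_combination hc₂ - hc₁
    have hdeg0 : (Pσ.map ι).natDegree = 0 := by
      have h1 : (Polynomial.C (ζ₂ - ζ₁) * Pσ.map ι).natDegree = (Pσ.map ι).natDegree :=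
        Polynomial.natDegree_C_mul (sub_ne_zero.mpr (Ne.symm hζne))
      rw [hkey, Polynomial.natDegree_C] at h1
      omega
    rw [hdegb] at hdeg0
    exact hPc hdeg0
  -- extract an irreducible factor of Φ
  obtain ⟨π, hπirr, hπΦ⟩ := WfDvdMonoid.exists_irreducible_factor hΦnu hΦ0
  have hπprime : Prime π := hπirr.prime
  -- residue field K[T]/(π)
  haveI hImax : (Ideal.span {π}).IsMaximal := PrincipalIdealRing.isMaximal_of_irreducible hπirr
  letI : Field (Polynomial K ⧸ Ideal.span {π}) := Ideal.Quotient.field _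
  set r : Polynomial K →+* Polynomial K ⧸ Ideal.span {π} := Ideal.Quotient.mk (Ideal.span {π})
    with hrdef
  have hr0 : ∀ x : Polynomial K, r x = 0 ↔ π ∣ x := fun x => by
    rw [hrdef, Ideal.Quotient.eq_zero_iff_mem, Ideal.mem_span_singleton]
  have hrC : ∀ a : K, a ≠ 0 → r (Polynomial.C a) ≠ 0 := by
    intro a ha h
    have h2 : π ∣ Polynomial.C a := (hr0 _).mp h
    exact hπirr.not_isUnit (isUnit_of_dvd_unit h2 (Polynomial.isUnit_C.mpr (isUnit_iff_ne_zero.mpr ha)))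
  have hΦsum : Φ = ∑ i ∈ Finset.range (d+1), Polynomial.C (c i) * P ^ i * Pσ ^ (d - i) := rfl
  have hnotboth : ¬ (π ∣ P ∧ π ∣ Pσ) := fun h => hπirr.not_isUnit (hunit π h.1 h.2)
  have hc0 : c 0 = 1 := Polynomial.cyclotomic_coeff_zero K (by omega)
  have hcd : c d = 1 := by
    have h := (Polynomial.cyclotomic.monic n K).coeff_natDegree
    rwa [Polynomial.natDegree_cyclotomic] at h
  have hnotP : ¬ π ∣ P := by
    intro hdP
    apply hnotboth
    refine ⟨hdP, hπprime.dvd_of_dvd_pow (n := d) ?_⟩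
    have hsum : Φ = Polynomial.C (c 0) * P ^ 0 * Pσ ^ (d - 0)
        + ∑ i ∈ (Finset.range (d+1)).erase 0, Polynomial.C (c i) * P ^ i * Pσ ^ (d - i) := by
      rw [hΦsum, Finset.add_sum_erase (Finset.range (d+1))
        (fun i => Polynomial.C (c i) * P ^ i * Pσ ^ (d - i)) (a := 0)
        (Finset.mem_range.mpr (by omega))]
    have hrest : π ∣ ∑ i ∈ (Finset.range (d+1)).erase 0,
        Polynomial.C (c i) * P ^ i * Pσ ^ (d - i) :=
      Finset.dvd_sum fun i hi =>
        Dvd.dvd.mul_right (Dvd.dvd.mul_left (dvd_pow hdP (Finset.mem_erase.mp hi).1) _) _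
    have hterm : π ∣ Polynomial.C (c 0) * P ^ 0 * Pσ ^ (d - 0) := by
      have h := dvd_sub hπΦ hrest
      rwa [hsum, add_sub_cancel_right] at h
    simpa [hc0] using hterm
  have hnotPσ : ¬ π ∣ Pσ := by
    intro hdPσ
    apply hnotboth
    refine ⟨hπprime.dvd_of_dvd_pow (n := d) ?_, hdPσ⟩
    have hsum : Φ = Polynomial.C (c d) * P ^ d * Pσ ^ (d - d)
        + ∑ i ∈ (Finset.range (d+1)).erase d, Polynomial.C (c i) * P ^ i * Pσ ^ (d - i) := by
      rw [hΦsum, Finset.add_sum_erase (Finset.range (d+1))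
        (fun i => Polynomial.C (c i) * P ^ i * Pσ ^ (d - i)) (a := d)
        (Finset.mem_range.mpr (by omega))]
    have hrest : π ∣ ∑ i ∈ (Finset.range (d+1)).erase d,
        Polynomial.C (c i) * P ^ i * Pσ ^ (d - i) :=
      Finset.dvd_sum fun i hi => by
        have hi1 : i ≠ d := (Finset.mem_erase.mp hi).1
        have hi2 : i < d + 1 := Finset.mem_range.mp (Finset.mem_erase.mp hi).2
        exact Dvd.dvd.mul_left (dvd_pow hdPσ (by omega)) _
    have hterm : π ∣ Polynomial.C (c d) * P ^ d * Pσ ^ (d - d) := by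
      have h := dvd_sub hπΦ hrest
      rwa [hsum, add_sub_cancel_right] at h
    simpa [hcd] using hterm
  have hα : r P ≠ 0 := fun h => hnotP ((hr0 P).mp h)
  have hβ : r Pσ ≠ 0 := fun h => hnotPσ ((hr0 Pσ).mp h)
  set α := r P with hαdef
  set β := r Pσ with hβdef
  set u := α / β with hu
  have hrΦ : ∑ i ∈ Finset.range (d+1), r (Polynomial.C (c i)) * α ^ i * β ^ (d - i) = 0 := by
    have h : r Φ = 0 := (hr0 Φ).mpr hπΦ
    rw [hΦsum, map_sum] at h
    simpa [map_mul, map_pow] using h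
  have hnR : ((n : Polynomial K ⧸ Ideal.span {π})) ≠ 0 := by
    have h1 : r ((n : Polynomial K)) = ((n : Polynomial K ⧸ Ideal.span {π})) := map_natCast r n
    rw [← h1]
    have h2 : ((n : Polynomial K)) = Polynomial.C ((n : K)) := by
      simp
    rw [h2]
    exact hrC _ hnK
  haveI : NeZero ((n : Polynomial K ⧸ Ideal.span {π})) := ⟨hnR⟩
  have hcoeff : ∀ i, (Polynomial.cyclotomic n (Polynomial K ⧸ Ideal.span {π})).coeff i
      = r (Polynomial.C (c i)) := by
    intro i
    rw [← Polynomial.map_cyclotomic n (r.comp Polynomial.C), Polynomial.coeff_map]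
    rfl
  have hevalsum : (Polynomial.cyclotomic n (Polynomial K ⧸ Ideal.span {π})).eval u
      = ∑ i ∈ Finset.range (d+1), r (Polynomial.C (c i)) * u ^ i := by
    rw [Polynomial.eval_eq_sum_range' (n := d + 1)
      (by rw [Polynomial.natDegree_cyclotomic]; omega)]
    exact Finset.sum_congr rfl fun i _ => by rw [hcoeff]
  have hβd : β ^ d ≠ 0 := pow_ne_zero _ hβ
  have hroot : (Polynomial.cyclotomic n (Polynomial K ⧸ Ideal.span {π})).eval u = 0 := by
    have hmulsum : β ^ d * (Polynomial.cyclotomic n (Polynomial K ⧸ Ideal.span {π})).eval u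
        = ∑ i ∈ Finset.range (d+1), r (Polynomial.C (c i)) * α ^ i * β ^ (d - i) := by
      rw [hevalsum, Finset.mul_sum]
      refine Finset.sum_congr rfl fun i hi => ?_
      have hi' : i ≤ d := Nat.lt_succ_iff.mp (Finset.mem_range.mp hi)
      rw [hu, div_pow]
      rw [show d = (d - i) + i from (Nat.sub_add_cancel hi').symm, Nat.add_sub_cancel, pow_add]
      field_simp
    have h := hmulsum.trans hrΦ
    exact (mul_eq_zero.mp h).resolve_left hβd
  have hprim : IsPrimitiveRoot u n := Polynomial.isRoot_cyclotomic_iff.mp hroot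
  have hgeom : ∀ m : ℕ, L m * (P - Pσ) = P ^ m - Pσ ^ m := fun m => by
    rw [hL m]; exact geom_sum₂_mul P Pσ m
  have hπLn : π ∣ L n := by
    have h1 : π ∣ L n * (P - Pσ) := by rw [hgeom n]; exact hπΦ.trans hdvd1
    rcases hπprime.2.2 _ _ h1 with h | h
    · exact h
    · exfalso
      have hαβ : α = β := by
        have h2 := (hr0 _).mpr h
        rw [map_sub] at h2
        exact sub_eq_zero.mp h2
      have hu1 : u = 1 := by rw [hu, hαβ, div_self hβ]
      have hn1 : n ∣ 1 := hprim.dvd_of_pow_eq_one 1 (by rw [pow_one, hu1])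
      have := Nat.le_of_dvd one_pos hn1
      omega
  refine ⟨π, hπirr, hπLn, ?_⟩
  intro m hm1 hmn hdvdm
  have h0 : r (L m) = 0 := (hr0 _).mpr hdvdm
  have hsum0 : (∑ i ∈ Finset.range m, α ^ i * β ^ (m - 1 - i)) = 0 := by
    have h : r (L m) = ∑ i ∈ Finset.range m, α ^ i * β ^ (m - 1 - i) := by
      rw [hL m, map_sum]
      simp [map_mul, map_pow]
      rfl
    rw [h] at h0
    exact h0
  have hαβ : α ^ m = β ^ m := by
    have h := geom_sum₂_mul α β m
    rw [hsum0, zero_mul] at h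
    exact sub_eq_zero.mp h.symm
  have hum : u ^ m = 1 := by
    rw [hu, div_pow, hαβ, div_self (pow_ne_zero _ hβ)]
  have hnm : n ∣ m := hprim.dvd_of_pow_eq_one m hum
  have := Nat.le_of_dvd (by omega) hnm
  omega
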